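/- Let 0 < α < β be reals, k ∈ ℕ, and s̄ = (β+α)/(β−α). Then for every t ∈ [0, β] one has 1 − T̃_{k+1}(t) ≥ (t/β)·(1 − 1/C_{k+1}(s̄)). (This is the bound min_{λ∈[0,β]} s_k(λ) ≥ (1/β)(1 − 1/C_{k+1}(s̄)) used in the proof of Lemma 1.) -/
import Mathlib


open Polynomial

/-- The polynomial `t ↦ C_{k+1}((β+α-2t)/(β-α)) / C_{k+1}((β+α)/(β-α))`, where `C` is the
Chebyshev polynomial of the first kind. -/
noncomputable def Ttilde (α β : ℝ) (k : ℕ) : Polynomial ℝ :=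
  Polynomial.C ((Polynomial.Chebyshev.T ℝ (k + 1)).eval ((β + α) / (β - α)))⁻¹ *
    ((Polynomial.Chebyshev.T ℝ (k + 1)).comp
      (Polynomial.C ((β + α) / (β - α)) - Polynomial.C (2 / (β - α)) * Polynomial.X))

/-- Chebyshev `T` evaluated at `1` equals `1`. -/
private lemma cheb_eval_one (n : ℤ) : (Polynomial.Chebyshev.T ℝ n).eval 1 = 1 := by
  have h := Polynomial.Chebyshev.T_real_cos 0 n
  simpa using h

/-- Chebyshev `T` is at most `1` on `[-1, 1]`. -/
private lemma cheb_le_one (n : ℤ) {x : ℝ} (h1 : -1 ≤ x) (h2 : x ≤ 1) :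
    (Polynomial.Chebyshev.T ℝ n).eval x ≤ 1 := by
  have h : x = Real.cos (Real.arccos x) := (Real.cos_arccos h1 h2).symm
  rw [h, Polynomial.Chebyshev.T_real_cos]
  exact Real.cos_le_one _

/-- The key package: `T n` is convex, monotone and `≥ 1` on `[1, ∞)`, and so is the
difference `T (n+1) - T n` (with `≥ 0`). -/
private lemma cheb_pkg (n : ℕ) :
    (ConvexOn ℝ (Set.Ici (1:ℝ)) (fun x => (Polynomial.Chebyshev.T ℝ n).eval x) ∧
      MonotoneOn (fun x => (Polynomial.Chebyshev.T ℝ n).eval x) (Set.Ici (1:ℝ)) ∧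
      ∀ x ∈ Set.Ici (1:ℝ), 1 ≤ (Polynomial.Chebyshev.T ℝ n).eval x) ∧
    (ConvexOn ℝ (Set.Ici (1:ℝ))
        (fun x => (Polynomial.Chebyshev.T ℝ (n+1)).eval x
          - (Polynomial.Chebyshev.T ℝ n).eval x) ∧
      MonotoneOn
        (fun x => (Polynomial.Chebyshev.T ℝ (n+1)).eval x
          - (Polynomial.Chebyshev.T ℝ n).eval x) (Set.Ici (1:ℝ)) ∧
      ∀ x ∈ Set.Ici (1:ℝ),
        0 ≤ (Polynomial.Chebyshev.T ℝ (n+1)).eval x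
          - (Polynomial.Chebyshev.T ℝ n).eval x) := by
  induction n with
  | zero =>
    constructor
    · refine ⟨?_, ?_, ?_⟩
      · simpa [Polynomial.Chebyshev.T_zero] using convexOn_const (1:ℝ) (convex_Ici (1:ℝ))
      · intro x _ y _ _
        simp [Polynomial.Chebyshev.T_zero]
      · intro x _
        simp [Polynomial.Chebyshev.T_zero]
    · refine ⟨?_, ?_, ?_⟩
      · refine ⟨convex_Ici 1, fun x _ y _ a b ha hb hab => ?_⟩
        simp only [Polynomial.Chebyshev.T_zero, Polynomial.Chebyshev.T_one, Nat.cast_zero,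
          zero_add, Polynomial.eval_one, Polynomial.eval_X, smul_eq_mul]
        nlinarith
      · intro x _ y _ hxy
        simp only [Polynomial.Chebyshev.T_zero, Polynomial.Chebyshev.T_one, Nat.cast_zero,
          zero_add, Polynomial.eval_one, Polynomial.eval_X]
        linarith
      · intro x hx
        simp only [Set.mem_Ici] at hx
        simp only [Polynomial.Chebyshev.T_zero, Polynomial.Chebyshev.T_one, Nat.cast_zero,
          zero_add, Polynomial.eval_one, Polynomial.eval_X]
        linarith
  | succ n ih =>
    obtain ⟨⟨hTc, hTm, hT1⟩, hGc, hGm, hG0⟩ := ih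
    have hcast : ((n + 1 : ℕ) : ℤ) = (n : ℤ) + 1 := by push_cast; ring
    rw [hcast]
    have hT1c : ConvexOn ℝ (Set.Ici (1:ℝ))
        (fun x => (Polynomial.Chebyshev.T ℝ ((n:ℤ)+1)).eval x) := by
      have heq : (fun x : ℝ => (Polynomial.Chebyshev.T ℝ ((n:ℤ)+1)).eval x)
          = (fun x : ℝ => (Polynomial.Chebyshev.T ℝ (n:ℤ)).eval x
              + ((Polynomial.Chebyshev.T ℝ ((n:ℤ)+1)).eval x
                - (Polynomial.Chebyshev.T ℝ (n:ℤ)).eval x)) := by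
        funext x; ring
      rw [heq]
      exact hTc.add hGc
    have hT1m : MonotoneOn (fun x => (Polynomial.Chebyshev.T ℝ ((n:ℤ)+1)).eval x)
        (Set.Ici (1:ℝ)) := by
      intro x hx y hy hxy
      have h1 := hTm hx hy hxy
      have h2 := hGm hx hy hxy
      dsimp only at h1 h2 ⊢
      linarith
    have hT11 : ∀ x ∈ Set.Ici (1:ℝ), 1 ≤ (Polynomial.Chebyshev.T ℝ ((n:ℤ)+1)).eval x := by
      intro x hx
      have h1 := hT1 x hx
      have h2 := hG0 x hx
      linarith
    have hT1nn : ∀ x ∈ Set.Ici (1:ℝ), 0 ≤ (Polynomial.Chebyshev.T ℝ ((n:ℤ)+1)).eval x :=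
      fun x hx => le_trans zero_le_one (hT11 x hx)
    -- the recurrence, evaluated
    have hrec : ∀ x : ℝ, (Polynomial.Chebyshev.T ℝ ((n:ℤ)+2)).eval x =
        2 * x * (Polynomial.Chebyshev.T ℝ ((n:ℤ)+1)).eval x
          - (Polynomial.Chebyshev.T ℝ (n:ℤ)).eval x := by
      intro x
      rw [Polynomial.Chebyshev.T_add_two]
      simp [mul_assoc]
    -- the affine factor
    have haffc : ConvexOn ℝ (Set.Ici (1:ℝ)) (fun x : ℝ => 2 * (x - 1)) := by
      refine ⟨convex_Ici 1, fun x _ y _ a b ha hb hab => ?_⟩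
      simp only [smul_eq_mul]
      nlinarith
    have haffm : MonotoneOn (fun x : ℝ => 2 * (x - 1)) (Set.Ici (1:ℝ)) := by
      intro x _ y _ hxy
      dsimp only
      linarith
    have haffnn : ∀ x ∈ Set.Ici (1:ℝ), 0 ≤ 2 * (x - 1) := by
      intro x hx
      simp only [Set.mem_Ici] at hx
      linarith
    have hprodc : ConvexOn ℝ (Set.Ici (1:ℝ))
        (fun x : ℝ => 2 * (x - 1) * (Polynomial.Chebyshev.T ℝ ((n:ℤ)+1)).eval x) := by
      have h := haffc.mul hT1c haffnn hT1nn (haffm.monovaryOn hT1m)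
      exact h
    have hprodm : MonotoneOn
        (fun x : ℝ => 2 * (x - 1) * (Polynomial.Chebyshev.T ℝ ((n:ℤ)+1)).eval x)
        (Set.Ici (1:ℝ)) := by
      intro x hx y hy hxy
      have h1 := haffm hx hy hxy
      have h2 := hT1m hx hy hxy
      dsimp only at h1 h2 ⊢
      exact mul_le_mul h1 h2 (hT1nn x hx) (le_trans (haffnn x hx) h1)
    have hG1eq : (fun x : ℝ => (Polynomial.Chebyshev.T ℝ ((n:ℤ)+1+1)).eval x
        - (Polynomial.Chebyshev.T ℝ ((n:ℤ)+1)).eval x)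
        = (fun x : ℝ => ((Polynomial.Chebyshev.T ℝ ((n:ℤ)+1)).eval x
            - (Polynomial.Chebyshev.T ℝ (n:ℤ)).eval x)
          + 2 * (x - 1) * (Polynomial.Chebyshev.T ℝ ((n:ℤ)+1)).eval x) := by
      funext x
      have h := hrec x
      rw [show ((n:ℤ)+1+1) = (n:ℤ)+2 by ring]
      rw [h]
      ring
    refine ⟨⟨hT1c, hT1m, hT11⟩, ?_, ?_, ?_⟩
    · rw [hG1eq]
      exact hGc.add hprodc
    · rw [hG1eq]
      intro x hx y hy hxy
      have h1 := hGm hx hy hxy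
      have h2 := hprodm hx hy hxy
      dsimp only at h1 h2 ⊢
      linarith
    · intro x hx
      have h1 := hG0 x hx
      have h2 : 0 ≤ 2 * (x - 1) * (Polynomial.Chebyshev.T ℝ ((n:ℤ)+1)).eval x :=
        mul_nonneg (haffnn x hx) (hT1nn x hx)
      have h3 := congrFun hG1eq x
      rw [h3]
      linarith

theorem stmt6 (α β : ℝ) (hα : 0 < α) (hαβ : α < β) (k : ℕ) :
    ∀ t ∈ Set.Icc (0 : ℝ) β,
      1 - (Ttilde α β k).eval t ≥
        (t / β) * (1 - 1 / (Polynomial.Chebyshev.T ℝ (k + 1)).eval ((β + α) / (β - α))) := by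
  intro t ht
  obtain ⟨ht0, htβ⟩ := ht
  have hA : (0:ℝ) < β - α := by linarith
  have hβ : (0:ℝ) < β := by linarith
  set s : ℝ := (β + α) / (β - α) with hs_def
  have hs1 : 1 < s := by
    rw [hs_def, lt_div_iff₀ hA]
    linarith
  -- the package, specialized to index k+1
  have pkg := (cheb_pkg (k + 1)).1
  have hcast : ((k + 1 : ℕ) : ℤ) = (k : ℤ) + 1 := by push_cast; ring
  rw [hcast] at pkg
  obtain ⟨hconv, hmono, hge1⟩ := pkg
  set c : ℝ := (Polynomial.Chebyshev.T ℝ ((k:ℤ) + 1)).eval s with hc_def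
  have hc1 : 1 ≤ c := hge1 s (le_of_lt hs1)
  have hc0 : (0:ℝ) < c := lt_of_lt_of_le one_pos hc1
  -- evaluate Ttilde
  set x : ℝ := s - 2 / (β - α) * t with hx_def
  have heval : (Ttilde α β k).eval t = c⁻¹ * (Polynomial.Chebyshev.T ℝ ((k:ℤ) + 1)).eval x := by
    simp [Ttilde, hx_def, hs_def, hc_def]
  -- key inequality: c - T(x) ≥ (t/β) * (c - 1)
  have key : (t / β) * (c - 1) ≤ c - (Polynomial.Chebyshev.T ℝ ((k:ℤ) + 1)).eval x := by
    rcases le_or_gt t α with htα | htα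
    · -- t ≤ α : x ∈ [1, s], use convexity
      have ha : (0:ℝ) ≤ 1 - t / α := by
        rw [sub_nonneg, div_le_one hα]
        exact htα
      have hb : (0:ℝ) ≤ t / α := div_nonneg ht0 hα.le
      have hab : (1 - t / α) + t / α = 1 := by ring
      have hxcomb : x = (1 - t / α) * s + (t / α) * 1 := by
        rw [hx_def, hs_def]
        field_simp
        ring
      have hsmem : s ∈ Set.Ici (1:ℝ) := le_of_lt hs1
      have h1mem : (1:ℝ) ∈ Set.Ici (1:ℝ) := Set.mem_Ici.mpr le_rfl
      have hcx := hconv.2 hsmem h1mem ha hb hab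
      simp only [smul_eq_mul] at hcx
      rw [← hxcomb] at hcx
      have hev1 : (Polynomial.Chebyshev.T ℝ ((k:ℤ) + 1)).eval 1 = 1 := cheb_eval_one _
      rw [hev1] at hcx
      -- hcx : T(x) ≤ (1 - t/α) * c + (t/α) * 1
      have h2 : t / β ≤ t / α := div_le_div_of_nonneg_left ht0 hα hαβ.le |>.trans_eq rfl
      nlinarith [mul_le_mul_of_nonneg_right h2 (by linarith : (0:ℝ) ≤ c - 1)]
    · -- α < t : x ∈ [-1, 1], T(x) ≤ 1
      have hxe : x = (β + α - 2 * t) / (β - α) := by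
        rw [hx_def, hs_def]
        field_simp
      have hxle : x ≤ 1 := by
        rw [hxe, div_le_one hA]
        linarith
      have hxge : -1 ≤ x := by
        rw [hxe, le_div_iff₀ hA]
        linarith
      have hT := cheb_le_one ((k:ℤ)+1) hxge hxle
      have htb : t / β ≤ 1 := (div_le_one hβ).mpr htβ
      nlinarith [mul_le_mul_of_nonneg_right htb (by linarith : (0:ℝ) ≤ c - 1)]
  -- conclude
  rw [heval, ge_iff_le, one_div]
  have hk := mul_le_mul_of_nonneg_left key (inv_nonneg.mpr hc0.le)
  have hcc : c⁻¹ * c = 1 := inv_mul_cancel₀ hc0.ne'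
  have e1 : c⁻¹ * (t / β * (c - 1)) = t / β * (1 - c⁻¹) := by
    linear_combination (t / β) * hcc
  have e2 : c⁻¹ * (c - (Polynomial.Chebyshev.T ℝ ((k:ℤ) + 1)).eval x)
      = 1 - c⁻¹ * (Polynomial.Chebyshev.T ℝ ((k:ℤ) + 1)).eval x := by
    linear_combination hcc
  rw [e1, e2] at hk
  exact hk
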